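/- arXiv:1112.1223 — 2 statements merged into one kernel-verified Lean document; each statement's English description precedes it below -/
import Mathlib

section
/- Every finitely generated residually finite group is Hopfian, i.e., every surjective group homomorphism from the group to itself is injective. -/
lemma finite_monoidHom_of_fg (G F : Type) [Group G] [Group F] [Finite F]
    (hfg : Group.FG G) : Finite (G →* F) := by
  obtain ⟨S, hS⟩ := hfg.1
  have : Function.Injective (fun φ : G →* F => fun s : S => φ s) := by
    intro φ ψ h
    refine MonoidHom.eq_of_eqOn_dense hS ?_
    intro x hx
    exact congrFun h ⟨x, hx⟩
  exact Finite.of_injective _ this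

theorem fg_residuallyFinite_hopfian (G : Type) [Group G]
    (hfg : Group.FG G)
    (hrf : ∀ g : G, g ≠ 1 → ∃ (F : Type) (_ : Group F) (_ : Finite F)
      (φ : G →* F), φ g ≠ 1)
    (f : G →* G) (hf : Function.Surjective f) :
    Function.Injective f := by
  rw [injective_iff_map_eq_one]
  intro g hg
  by_contra hne
  obtain ⟨F, _, _, φ, hφ⟩ := hrf g hne
  have hfin := finite_monoidHom_of_fg G F hfg
  have hinj : Function.Injective (fun ψ : G →* F => ψ.comp f) := by
    intro ψ₁ ψ₂ h
    ext x
    obtain ⟨y, rfl⟩ := hf x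
    exact congrArg (fun χ : G →* F => χ y) h
  have hsurj := Finite.surjective_of_injective hinj
  obtain ⟨ψ, hψ⟩ := hsurj φ
  have : φ g = 1 := by
    rw [← hψ]
    simp [MonoidHom.comp_apply, hg]
  exact hφ this
end

section
/- Let H be a group generated by a finite set S, and let G = ⟨S ∣ R⟩ be a presented group together with an abstract isomorphism φ : G → H (not necessarily the canonical map). If H is Hopfian, then the kernel of the canonical surjection F(S) → H equals the normal closure of R in the free group F(S). -/
theorem kernel_eq_normalClosure_of_hopfian (H : Type) [Group H]
    (S : Type) [Finite S] (ι : S → H)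
    (hgen : Subgroup.closure (Set.range ι) = ⊤)
    (R : Set (FreeGroup S))
    (hR : ∀ r ∈ R, FreeGroup.lift ι r = 1)
    (hHopf : ∀ g : H →* H, Function.Surjective g → Function.Injective g)
    (hiso : Nonempty (PresentedGroup R ≃* H)) :
    (FreeGroup.lift ι).ker = Subgroup.normalClosure R := by
  obtain ⟨φ⟩ := hiso
  set ψ : PresentedGroup R →* H := PresentedGroup.toGroup hR with hψ
  have hsurj : Function.Surjective ψ := by
    rw [← MonoidHom.range_eq_top]
    rw [eq_top_iff, ← hgen, Subgroup.closure_le]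
    rintro _ ⟨s, rfl⟩
    exact ⟨PresentedGroup.of s, PresentedGroup.toGroup.of hR⟩
  have hinj : Function.Injective (ψ.comp φ.symm.toMonoidHom) :=
    hHopf _ (hsurj.comp φ.symm.surjective)
  have hψinj : Function.Injective ψ := by
    intro a b hab
    have : ψ.comp φ.symm.toMonoidHom (φ a) = ψ.comp φ.symm.toMonoidHom (φ b) := by
      simp [MonoidHom.comp_apply, hab]
    exact φ.injective (hinj this)
  have hcomp : (FreeGroup.lift ι) =
      ψ.comp (QuotientGroup.mk' (Subgroup.normalClosure R)) := by
    ext s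
    rfl
  erw [hcomp, ← MonoidHom.comap_ker, (MonoidHom.ker_eq_bot_iff ψ).2 hψinj,
    MonoidHom.comap_bot, QuotientGroup.ker_mk']
end
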